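/- Let n ≥ 1 and let M be the n×n real tridiagonal matrix with diagonal entries (b-α, b, b, ..., b, b-β), subdiagonal entries all equal to a, and superdiagonal entries all equal to c, where ac > 0 and α = β = √(ac) ≠ 0. Then the eigenvalues of M are exactly λ_i = b + 2√(ac)·cos(iπ/n) for i = 1, ..., n. -/

import Mathlib

open Finset Real

def triM (n : ℕ) (α β a b c : ℝ) : Matrix (Fin n) (Fin n) ℝ := fun i j =>
  if i = j then b - (if (i : ℕ) = 0 then α else 0) - (if (i : ℕ) = n - 1 then β else 0)
  else if (i : ℕ) + 1 = (j : ℕ) then c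
  else if (j : ℕ) + 1 = (i : ℕ) then a
  else 0

lemma triM_exists_eigvec (n : ℕ) (hn : 1 ≤ n) (α β a b c : ℝ)
    (hac : 0 < a * c) (hα : α = Real.sqrt (a * c)) (hβ : β = Real.sqrt (a * c))
    (i : Fin n) :
    ∃ v : Fin n → ℝ, v ≠ 0 ∧ (triM n α β a b c).mulVec v =
      (b + 2 * Real.sqrt (a * c) * Real.cos ((((i : ℕ) : ℝ) + 1) * π / n)) • v := by
  have hnR : (0:ℝ) < (n:ℝ) := by positivity
  have hnR0 : (n:ℝ) ≠ 0 := ne_of_gt hnR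
  set s : ℝ := Real.sqrt (a * c) with hs_def
  have hs : 0 < s := Real.sqrt_pos.mpr hac
  have hs2 : s ^ 2 = a * c := Real.sq_sqrt hac.le
  have ha0 : a ≠ 0 := by rintro rfl; simp at hac
  obtain ⟨t, ht0, hts, hct⟩ : ∃ t : ℝ, t ≠ 0 ∧ t * s = a ∧ c * t = s := by
    refine ⟨a / s, div_ne_zero ha0 (ne_of_gt hs), div_mul_cancel₀ a (ne_of_gt hs), ?_⟩
    field_simp
    nlinarith [hs2]
  set θ : ℝ := (((i : ℕ) : ℝ) + 1) * π / n with hθ_def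
  set lam : ℝ := b + 2 * s * Real.cos θ with hlam_def
  set V : ℕ → ℝ := fun m => t ^ m * Real.sin ((2 * (m:ℝ) - 1) * θ / 2) with hV_def
  have hsinadd : ∀ x y : ℝ, Real.sin (x - y) + Real.sin (x + y) = 2 * Real.sin x * Real.cos y := by
    intro x y; rw [Real.sin_sub, Real.sin_add]; ring
  -- interior recurrence
  have L1 : ∀ m : ℕ, a * V m + b * V (m+1) + c * V (m+2) = lam * V (m+1) := by
    intro m
    simp only [hV_def]
    push_cast
    have e1 : (2 * (m:ℝ) - 1) * θ / 2 = (2 * ((m:ℝ)+1) - 1) * θ / 2 - θ := by ring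
    have e2 : (2 * ((m:ℝ)+2) - 1) * θ / 2 = (2 * ((m:ℝ)+1) - 1) * θ / 2 + θ := by ring
    rw [e1, e2, Real.sin_sub, Real.sin_add, hlam_def]
    have hp : t ^ (m+1) = t ^ m * t := pow_succ t m
    have hp2 : t ^ (m+2) = t ^ m * t * t := by rw [pow_succ, pow_succ]
    rw [hp, hp2]
    set X := Real.sin ((2 * ((m:ℝ)+1) - 1) * θ / 2)
    set C := Real.cos θ
    set Sθ := Real.sin θ
    set Cx := Real.cos ((2 * ((m:ℝ)+1) - 1) * θ / 2)
    linear_combination (-(X * C - Cx * Sθ) * t^m) * hts + ((X * C + Cx * Sθ) * t^m * t) * hct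
  -- left boundary
  have L2 : a * V 0 = -α * V 1 := by
    simp only [hV_def]
    push_cast
    have e1 : (2 * (0:ℝ) - 1) * θ / 2 = -(θ/2) := by ring
    have e2 : (2 * (1:ℝ) - 1) * θ / 2 = θ/2 := by ring
    rw [e1, e2, Real.sin_neg, hα]
    linear_combination (Real.sin (θ/2)) * hts
  -- right boundary
  have L3 : c * V (n+1) = -β * V n := by
    simp only [hV_def]
    push_cast
    have e1 : (2 * ((n:ℝ)+1) - 1) * θ / 2 = (((i:ℕ):ℝ)+1) * π + θ/2 := by
      rw [hθ_def]; field_simp; ring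
    have e2 : (2 * (n:ℝ) - 1) * θ / 2 = (((i:ℕ):ℝ)+1) * π - θ/2 := by
      rw [hθ_def]; field_simp
    have hsin0 : Real.sin ((((i:ℕ):ℝ)+1) * π) = 0 := by
      have h := Real.sin_nat_mul_pi ((i:ℕ)+1)
      push_cast at h
      exact h
    rw [e1, e2, Real.sin_add, Real.sin_sub, hsin0, hβ]
    have hp : t ^ (n+1) = t ^ n * t := pow_succ t n
    rw [hp]
    set CK := Real.cos ((((i:ℕ):ℝ)+1) * π)
    linear_combination (t^n * CK * Real.sin (θ/2)) * hct
  refine ⟨fun j => V ((j:ℕ)+1), ?_, ?_⟩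
  · -- nonzero
    intro h
    have h0 : V 1 = 0 := congrFun h ⟨0, hn⟩
    have hθpos : 0 < θ := by
      apply div_pos (mul_pos _ Real.pi_pos) hnR
      positivity
    have hθle : θ ≤ π := by
      rw [hθ_def, div_le_iff₀ hnR]
      have : ((i:ℕ):ℝ) + 1 ≤ (n:ℝ) := by
        have := i.isLt; exact_mod_cast Nat.succ_le_of_lt this
      nlinarith [Real.pi_pos]
    have hsinpos : 0 < Real.sin (θ/2) := by
      apply Real.sin_pos_of_pos_of_lt_pi (by linarith)
      linarith [Real.pi_pos]
    simp only [hV_def] at h0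
    push_cast at h0
    have e2 : (2 * (1:ℝ) - 1) * θ / 2 = θ/2 := by ring
    rw [e2, pow_one] at h0
    exact absurd h0 (mul_ne_zero ht0 (ne_of_gt hsinpos))
  · -- eigen equation
    funext p
    show ∑ j, triM n α β a b c p j * V ((j:ℕ)+1) = lam * V ((p:ℕ)+1)
    have hsplit : ∀ j : Fin n, triM n α β a b c p j * V ((j:ℕ)+1) =
        (if j = p then (b - (if (p:ℕ) = 0 then α else 0) -
          (if (p:ℕ) = n-1 then β else 0)) * V ((p:ℕ)+1) else 0)
        + (if (p:ℕ)+1 = (j:ℕ) then c * V ((j:ℕ)+1) else 0)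
        + (if (j:ℕ)+1 = (p:ℕ) then a * V ((j:ℕ)+1) else 0) := by
      intro j
      rcases eq_or_ne p j with h | h
      · subst h
        simp [triM, (by omega : ¬((p:ℕ)+1 = (p:ℕ)))]
      · have h'' : j ≠ p := fun hh => h hh.symm
        simp only [triM, if_neg h, if_neg h'']
        rcases eq_or_ne ((p:ℕ)+1) (j:ℕ) with h2 | h2
        · rw [if_pos h2, if_pos h2, if_neg (by omega : ¬((j:ℕ)+1 = (p:ℕ)))]
          ring
        · rw [if_neg h2, if_neg h2]
          rcases eq_or_ne ((j:ℕ)+1) (p:ℕ) with h3 | h3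
          · rw [if_pos h3, if_pos h3]; ring
          · rw [if_neg h3, if_neg h3]; ring
    rw [Finset.sum_congr rfl fun j _ => hsplit j]
    rw [Finset.sum_add_distrib, Finset.sum_add_distrib]
    rw [Finset.sum_ite_eq' Finset.univ p]
    simp only [Finset.mem_univ, if_true]
    rcases Nat.lt_or_ge ((p:ℕ)+1) n with hp2 | hp2
    · have hS2 : ∑ j : Fin n, (if (p:ℕ)+1 = (j:ℕ) then c * V ((j:ℕ)+1) else 0)
          = c * V ((p:ℕ)+2) := by
        rw [Finset.sum_eq_single (⟨(p:ℕ)+1, hp2⟩ : Fin n)]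
        · simp
        · intro j _ hj
          rw [if_neg]
          intro hh
          exact hj (Fin.ext hh.symm)
        · intro h; exact absurd (Finset.mem_univ _) h
      rw [hS2]
      rcases Nat.eq_zero_or_pos (p:ℕ) with hp3 | hp3
      · have hS3 : ∑ j : Fin n, (if (j:ℕ)+1 = (p:ℕ) then a * V ((j:ℕ)+1) else 0) = 0 := by
          apply Finset.sum_eq_zero
          intro j _
          rw [if_neg]; omega
        rw [hS3, if_pos hp3, if_neg (by omega : ¬((p:ℕ) = n - 1)), hp3]
        linear_combination (L1 0) - L2
      · have hS3 : ∑ j : Fin n, (if (j:ℕ)+1 = (p:ℕ) then a * V ((j:ℕ)+1) else 0)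
            = a * V (p:ℕ) := by
          rw [Finset.sum_eq_single (⟨(p:ℕ)-1, by omega⟩ : Fin n)]
          · rw [if_pos (by simp; omega)]
            congr 2
            simp; omega
          · intro j _ hj
            rw [if_neg]
            intro hh
            exact hj (Fin.ext (by simp; omega))
          · intro h; exact absurd (Finset.mem_univ _) h
        rw [hS3, if_neg (by omega : ¬((p:ℕ) = 0)), if_neg (by omega : ¬((p:ℕ) = n - 1))]
        linear_combination L1 (p:ℕ)
    · -- p is the last row: (p:ℕ) = n-1, and p+1 = n
      have hplast : (p:ℕ) = n - 1 := by have := p.isLt; omega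
      have hpn : (p:ℕ) + 1 = n := by have := p.isLt; omega
      have hS2 : ∑ j : Fin n, (if (p:ℕ)+1 = (j:ℕ) then c * V ((j:ℕ)+1) else 0) = 0 := by
        apply Finset.sum_eq_zero
        intro j _
        rw [if_neg]
        have := j.isLt; omega
      rw [hS2]
      rcases Nat.eq_zero_or_pos (p:ℕ) with hp3 | hp3
      · -- n = 1
        have hn1 : n = 1 := by omega
        have hS3 : ∑ j : Fin n, (if (j:ℕ)+1 = (p:ℕ) then a * V ((j:ℕ)+1) else 0) = 0 := by
          apply Finset.sum_eq_zero
          intro j _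
          rw [if_neg]; omega
        rw [hS3, if_pos hp3, if_pos hplast, hp3]
        have L3' := L3
        rw [hn1] at L3'
        norm_num at L3'
        linear_combination (L1 0) - L2 - L3'
      · have hS3 : ∑ j : Fin n, (if (j:ℕ)+1 = (p:ℕ) then a * V ((j:ℕ)+1) else 0)
            = a * V (p:ℕ) := by
          rw [Finset.sum_eq_single (⟨(p:ℕ)-1, by omega⟩ : Fin n)]
          · rw [if_pos (by simp; omega)]
            congr 2
            simp; omega
          · intro j _ hj
            rw [if_neg]
            intro hh
            exact hj (Fin.ext (by simp; omega))
          · intro h; exact absurd (Finset.mem_univ _) h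
        rw [hS3, if_neg (by omega : ¬((p:ℕ) = 0)), if_pos hplast]
        have L3' : c * V ((p:ℕ)+2) = -β * V ((p:ℕ)+1) := by
          rw [show (p:ℕ)+2 = n+1 by omega, show (p:ℕ)+1 = n by omega]
          exact L3
        linear_combination L1 (p:ℕ) - L3'

theorem triM_eigenvalues (n : ℕ) (hn : 1 ≤ n) (α β a b c : ℝ)
    (hac : 0 < a * c) (hα : α = Real.sqrt (a * c)) (hβ : β = Real.sqrt (a * c)) :
    {lam : ℝ | ∃ v : Fin n → ℝ, v ≠ 0 ∧ (triM n α β a b c).mulVec v = lam • v} =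
      {lam : ℝ | ∃ i : Fin n, lam = b + 2 * Real.sqrt (a * c) *
        Real.cos ((((i : ℕ) : ℝ) + 1) * π / n)} := by
  have hnR : (0:ℝ) < (n:ℝ) := by exact_mod_cast Nat.lt_of_lt_of_le Nat.zero_lt_one hn
  have hs : 0 < Real.sqrt (a * c) := Real.sqrt_pos.mpr hac
  set F : Fin n → ℝ := fun i => b + 2 * Real.sqrt (a*c) *
    Real.cos ((((i:ℕ):ℝ)+1) * π / n) with hF
  have hFmem : ∀ i : Fin n, ((((i:ℕ):ℝ)+1) * π / n) ∈ Set.Icc 0 π := by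
    intro i
    constructor
    · positivity
    · rw [div_le_iff₀ hnR]
      have hi : ((i:ℕ):ℝ) + 1 ≤ (n:ℝ) := by
        have := i.isLt
        exact_mod_cast Nat.succ_le_of_lt this
      nlinarith [Real.pi_pos]
  have hFinj : Function.Injective F := by
    intro i j hij
    have h2 : (2 : ℝ) * Real.sqrt (a*c) ≠ 0 := by positivity
    have hcos : Real.cos ((((i:ℕ):ℝ)+1)*π/n) = Real.cos ((((j:ℕ):ℝ)+1)*π/n) :=
      mul_left_cancel₀ h2 (by simp only [hF] at hij; linarith)
    have harg := Real.injOn_cos (hFmem i) (hFmem j) hcos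
    have h3 : ((i:ℕ):ℝ) = ((j:ℕ):ℝ) := by
      field_simp at harg
      linarith
    exact Fin.ext (by exact_mod_cast h3)
  ext lam
  simp only [Set.mem_setOf_eq]
  constructor
  · rintro ⟨v, hv0, hv⟩
    by_contra hno
    push_neg at hno
    set T : Finset ℝ := insert lam (Finset.univ.image F) with hT
    have hlamT : lam ∉ Finset.univ.image F := by
      simp only [Finset.mem_image, Finset.mem_univ, true_and]
      rintro ⟨i, hi⟩
      exact hno i hi.symm
    have hcard : T.card = n + 1 := by
      rw [hT, Finset.card_insert_of_notMem hlamT,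
        Finset.card_image_of_injective _ hFinj, Finset.card_univ, Fintype.card_fin]
    have hEx : ∀ x ∈ T, ∃ w : Fin n → ℝ, w ≠ 0 ∧ (triM n α β a b c).mulVec w = x • w := by
      intro x hx
      rcases Finset.mem_insert.mp hx with rfl | hx'
      · exact ⟨v, hv0, hv⟩
      · simp only [Finset.mem_image, Finset.mem_univ, true_and] at hx'
        rcases hx' with ⟨i, rfl⟩
        exact triM_exists_eigvec n hn α β a b c hac hα hβ i
    choose w hw0 hw using hEx
    have hLI : LinearIndependent ℝ (fun x : {x // x ∈ T} => w x x.2) := by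
      apply Module.End.eigenvectors_linearIndependent'
        (Matrix.mulVecLin (triM n α β a b c)) (fun x : {x // x ∈ T} => (x:ℝ))
        Subtype.val_injective
      intro x
      refine ⟨Module.End.mem_eigenspace_iff.mpr ?_, hw0 x x.2⟩
      simpa [Matrix.mulVecLin_apply] using hw x x.2
    have hle := hLI.fintype_card_le_finrank
    rw [Module.finrank_fintype_fun_eq_card, Fintype.card_fin] at hle
    rw [Fintype.card_coe, hcard] at hle
    omega
  · rintro ⟨i, rfl⟩
    exact triM_exists_eigvec n hn α β a b c hac hα hβ i
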